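/- Half-plane argument lemma: let U ⊆ ℂ be open, let f : ℂ → ℂ be holomorphic (complex differentiable) on U, and let γ : ℝ → ℂ be continuously differentiable on [0,1] with γ(t) ∈ U, f(γ(t)) ≠ 0, and Re(f(γ(t))) > 0 for all t ∈ [0,1]. Then Im ∫₀¹ (f′(γ(t)) · γ′(t) / f(γ(t))) dt = arg(f(γ(1))) − arg(f(γ(0))); in particular, the absolute value of this imaginary part is strictly less than π. -/

import Mathlib

open Complex intervalIntegral

/-- Half-plane argument lemma: if `f` is holomorphic on an open set `U` and `γ` is a `C¹`
path in `U` on which `f` is nonvanishing with values in the right half-plane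
`Re > 0`, then the imaginary part of `∫₀¹ f′(γ t) · γ′(t) / f(γ t) dt` equals
`arg (f (γ 1)) - arg (f (γ 0))`; in particular its absolute value is less than `π`. -/
theorem stmt_6 (U : Set ℂ) (hU : IsOpen U) (f : ℂ → ℂ) (hf : DifferentiableOn ℂ f U)
    (γ : ℝ → ℂ) (hγ : ContDiffOn ℝ 1 γ (Set.Icc 0 1))
    (hmem : ∀ t ∈ Set.Icc (0 : ℝ) 1, γ t ∈ U)
    (hne : ∀ t ∈ Set.Icc (0 : ℝ) 1, f (γ t) ≠ 0)
    (hre : ∀ t ∈ Set.Icc (0 : ℝ) 1, 0 < (f (γ t)).re) :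
    (∫ t in (0 : ℝ)..1, deriv f (γ t) * deriv γ t / f (γ t)).im
        = (f (γ 1)).arg - (f (γ 0)).arg ∧
      |(∫ t in (0 : ℝ)..1, deriv f (γ t) * deriv γ t / f (γ t)).im| < Real.pi := by
  have hslit : ∀ t ∈ Set.Icc (0:ℝ) 1, f (γ t) ∈ Complex.slitPlane := fun t ht =>
    Or.inl (hre t ht)
  have hγc : ContinuousOn γ (Set.Icc 0 1) := hγ.continuousOn
  have hmaps : Set.MapsTo γ (Set.Icc 0 1) U := fun t ht => hmem t ht
  have hfc : ContinuousOn (fun t => f (γ t)) (Set.Icc 0 1) :=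
    hf.continuousOn.comp hγc hmaps
  have hdγc : ContinuousOn (derivWithin γ (Set.Icc 0 1)) (Set.Icc 0 1) :=
    hγ.continuousOn_derivWithin (uniqueDiffOn_Icc one_pos) le_rfl
  have hdfc : ContinuousOn (fun t => deriv f (γ t)) (Set.Icc 0 1) :=
    ((hf.analyticOnNhd hU).deriv.continuousOn).comp hγc hmaps
  -- the modified integrand, continuous on `Icc 0 1`
  set g'' : ℝ → ℂ := fun t => deriv f (γ t) * derivWithin γ (Set.Icc 0 1) t / f (γ t) with hg''
  have hg''c : ContinuousOn g'' (Set.Icc 0 1) :=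
    (hdfc.mul hdγc).div hfc hne
  have hg''int : IntervalIntegrable g'' MeasureTheory.volume 0 1 :=
    hg''c.intervalIntegrable_of_Icc zero_le_one
  -- the integrands agree on `Ioo 0 1`
  have heq : ∀ t ∈ Set.Ioo (0:ℝ) 1, deriv f (γ t) * deriv γ t / f (γ t) = g'' t := by
    intro t ht
    have : derivWithin γ (Set.Icc 0 1) t = deriv γ t :=
      derivWithin_of_mem_nhds (Icc_mem_nhds ht.1 ht.2)
    simp [g'', this]
  have hint : IntervalIntegrable (fun t => deriv f (γ t) * deriv γ t / f (γ t))
      MeasureTheory.volume 0 1 := by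
    refine hg''int.congr_ae ?_
    have h1 : ∀ᵐ t ∂(MeasureTheory.volume.restrict (Set.uIoc (0:ℝ) 1)),
        t ∈ Set.uIoc (0:ℝ) 1 := MeasureTheory.ae_restrict_mem measurableSet_uIoc
    have h2 : ∀ᵐ t ∂(MeasureTheory.volume.restrict (Set.uIoc (0:ℝ) 1)), t ≠ 1 := by
      refine MeasureTheory.ae_restrict_of_ae ?_
      have : MeasureTheory.volume ({(1:ℝ)} : Set ℝ) = 0 := MeasureTheory.measure_singleton 1
      exact MeasureTheory.measure_mono_null (fun x hx => by simpa using hx) this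
    filter_upwards [h1, h2] with t ht ht1
    rw [Set.uIoc_of_le zero_le_one] at ht
    exact (heq t ⟨ht.1, lt_of_le_of_ne ht.2 ht1⟩).symm
  -- FTC for `log ∘ f ∘ γ`
  have hlogc : ContinuousOn Complex.log {z : ℂ | 0 < z.re} := fun z hz =>
    (continuousAt_clog (Or.inl hz)).continuousWithinAt
  have hcont : ContinuousOn (fun t => Complex.log (f (γ t))) (Set.Icc 0 1) :=
    hlogc.comp hfc (fun t ht => hre t ht)
  have hderiv : ∀ t ∈ Set.Ioo (0:ℝ) 1,
      HasDerivAt (fun t => Complex.log (f (γ t)))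
        (deriv f (γ t) * deriv γ t / f (γ t)) t := by
    intro t ht
    have htI : t ∈ Set.Icc (0:ℝ) 1 := Set.Ioo_subset_Icc_self ht
    have hγt : HasDerivAt γ (deriv γ t) t := by
      have := (hγ.differentiableOn one_ne_zero t htI).differentiableAt
        (Icc_mem_nhds ht.1 ht.2)
      exact this.hasDerivAt
    have hft : HasDerivAt f (deriv f (γ t)) (γ t) :=
      (hf.differentiableAt (hU.mem_nhds (hmem t htI))).hasDerivAt
    have hlog : HasDerivAt Complex.log (f (γ t))⁻¹ (f (γ t)) :=
      Complex.hasDerivAt_log (hslit t htI)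
    have := (hlog.comp t (hft.comp t hγt))
    convert this using 1
    · rfl
    · rfl
    · ring
  have hFTC :
      (∫ t in (0:ℝ)..1, deriv f (γ t) * deriv γ t / f (γ t))
        = Complex.log (f (γ 1)) - Complex.log (f (γ 0)) :=
    intervalIntegral.integral_eq_sub_of_hasDerivAt_of_le zero_le_one hcont hderiv hint
  have him : (∫ t in (0:ℝ)..1, deriv f (γ t) * deriv γ t / f (γ t)).im
      = (f (γ 1)).arg - (f (γ 0)).arg := by
    rw [hFTC, Complex.sub_im, Complex.log_im, Complex.log_im]
  refine ⟨him, ?_⟩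
  rw [him]
  have h1 : |(f (γ 1)).arg| < Real.pi / 2 :=
    Complex.abs_arg_lt_pi_div_two_iff.mpr (Or.inl (hre 1 (by norm_num)))
  have h0 : |(f (γ 0)).arg| < Real.pi / 2 :=
    Complex.abs_arg_lt_pi_div_two_iff.mpr (Or.inl (hre 0 (by norm_num)))
  calc |(f (γ 1)).arg - (f (γ 0)).arg| ≤ |(f (γ 1)).arg| + |(f (γ 0)).arg| := abs_sub _ _
    _ < Real.pi / 2 + Real.pi / 2 := by linarith
    _ = Real.pi := by ring
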